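/- Let k be a field with char k ≠ 2 and l ≥ 2. For every matrix g ∈ GL(2l,k) satisfying ᵀg·β·g = μ·β for some μ ∈ kˣ (i.e., g lies in the symplectic similitude group GSp(2l,k) with similitude factor μ), there exists a matrix E in the subgroup of GL(2l,k) generated by the elementary symplectic matrices such that g = E · diag(1,…,1,μ,…,μ), where the diagonal matrix has its first l diagonal entries equal to 1 and its last l diagonal entries equal to μ. -/

import Mathlib

open Matrix

/-- The elementary symplectic matrices of size `2l`, with rows and columns indexed by
`Fin l ⊕ Fin l` (the first summand plays the role of the indices `1, …, l` and the
second summand the role of `-1, …, -l`). -/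
def sympElem (k : Type*) [Field k] (l : ℕ) :
    Set (Matrix (Fin l ⊕ Fin l) (Fin l ⊕ Fin l) k) :=
  {M | ∃ t : k,
    (∃ i j : Fin l, i ≠ j ∧
      M = 1 + (Matrix.single (Sum.inl i) (Sum.inl j) t
              - Matrix.single (Sum.inr j) (Sum.inr i) t)) ∨
    (∃ i j : Fin l, i < j ∧
      M = 1 + (Matrix.single (Sum.inl i) (Sum.inr j) t
              + Matrix.single (Sum.inl j) (Sum.inr i) t)) ∨
    (∃ i j : Fin l, i < j ∧
      M = 1 + (Matrix.single (Sum.inr i) (Sum.inl j) t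
              + Matrix.single (Sum.inr j) (Sum.inl i) t)) ∨
    (∃ i : Fin l, M = 1 + Matrix.single (Sum.inl i) (Sum.inr i) t) ∨
    (∃ i : Fin l, M = 1 + Matrix.single (Sum.inr i) (Sum.inl i) t)}

namespace GSpGauss

variable {k : Type*} [Field k] {l : ℕ}

local notation "𝕄" => Matrix (Fin l ⊕ Fin l) (Fin l ⊕ Fin l) k
local notation "𝕃" => Matrix (Fin l) (Fin l) k
local notation "H" => Submonoid.closure (sympElem k l)

/-! ### std basis corner lemmas -/

lemma std_ll (i j : Fin l) (t : k) :
    (Matrix.single (Sum.inl i) (Sum.inl j) t : 𝕄) = fromBlocks (Matrix.single i j t) 0 0 0 := by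
  ext (a|a) (b|b) <;> simp [Matrix.single, fromBlocks]

lemma std_lr (i j : Fin l) (t : k) :
    (Matrix.single (Sum.inl i) (Sum.inr j) t : 𝕄) = fromBlocks 0 (Matrix.single i j t) 0 0 := by
  ext (a|a) (b|b) <;> simp [Matrix.single, fromBlocks]

lemma std_rl (i j : Fin l) (t : k) :
    (Matrix.single (Sum.inr i) (Sum.inl j) t : 𝕄) = fromBlocks 0 0 (Matrix.single i j t) 0 := by
  ext (a|a) (b|b) <;> simp [Matrix.single, fromBlocks]

lemma std_rr (i j : Fin l) (t : k) :
    (Matrix.single (Sum.inr i) (Sum.inr j) t : 𝕄) = fromBlocks 0 0 0 (Matrix.single i j t) := by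
  ext (a|a) (b|b) <;> simp [Matrix.single, fromBlocks]

/-! ### generators in block form -/

lemma one_add_fromBlocks (A B C D : 𝕃) :
    (1 : 𝕄) + fromBlocks A B C D = fromBlocks (1 + A) B C (1 + D) := by
  rw [← fromBlocks_one, fromBlocks_add]; norm_num

lemma gen1_mem (i j : Fin l) (hij : i ≠ j) (t : k) :
    (fromBlocks (1 + Matrix.single i j t) 0 0 (1 - Matrix.single j i t) : 𝕄) ∈ H := by
  apply Submonoid.subset_closure
  refine ⟨t, Or.inl ⟨i, j, hij, ?_⟩⟩
  rw [std_ll, std_rr, show (fromBlocks (Matrix.single i j t) 0 0 0 - fromBlocks 0 0 0 (Matrix.single j i t) : 𝕄) =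
    fromBlocks (Matrix.single i j t) 0 0 (-Matrix.single j i t) from by
      rw [sub_eq_add_neg, fromBlocks_neg, fromBlocks_add]; norm_num]
  rw [one_add_fromBlocks]; norm_num
  rw [sub_eq_add_neg]

lemma gen2_mem (i j : Fin l) (hij : i < j) (t : k) :
    (fromBlocks 1 (Matrix.single i j t + Matrix.single j i t) 0 1 : 𝕄) ∈ H := by
  apply Submonoid.subset_closure
  refine ⟨t, Or.inr (Or.inl ⟨i, j, hij, ?_⟩)⟩
  rw [std_lr, std_lr, fromBlocks_add, one_add_fromBlocks]; norm_num

lemma gen3_mem (i j : Fin l) (hij : i < j) (t : k) :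
    (fromBlocks 1 0 (Matrix.single i j t + Matrix.single j i t) 1 : 𝕄) ∈ H := by
  apply Submonoid.subset_closure
  refine ⟨t, Or.inr (Or.inr (Or.inl ⟨i, j, hij, ?_⟩))⟩
  rw [std_rl, std_rl, fromBlocks_add, one_add_fromBlocks]; norm_num

lemma gen4_mem (i : Fin l) (t : k) :
    (fromBlocks 1 (Matrix.single i i t) 0 1 : 𝕄) ∈ H := by
  apply Submonoid.subset_closure
  refine ⟨t, Or.inr (Or.inr (Or.inr (Or.inl ⟨i, ?_⟩)))⟩
  rw [std_lr, one_add_fromBlocks]; norm_num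

lemma gen5_mem (i : Fin l) (t : k) :
    (fromBlocks 1 0 (Matrix.single i i t) 1 : 𝕄) ∈ H := by
  apply Submonoid.subset_closure
  refine ⟨t, Or.inr (Or.inr (Or.inr (Or.inr ⟨i, ?_⟩)))⟩
  rw [std_rl, one_add_fromBlocks]; norm_num

/-! ### inverse closedness -/

lemma std_neg {n : Type*} [DecidableEq n] (i j : n) (t : k) :
    Matrix.single i j (-t) = -(Matrix.single i j t : Matrix n n k) := by
  ext a b
  simp only [Matrix.single, of_apply, neg_apply]
  split_ifs <;> simp_all

lemma closure_inv {M : 𝕄} (hM : M ∈ H) : ∃ M' ∈ H, M * M' = 1 ∧ M' * M = 1 := by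
  induction hM using Submonoid.closure_induction with
  | mem M hMs =>
      obtain ⟨t, h1 | h2 | h3 | h4 | h5⟩ := hMs
      · obtain ⟨i, j, hij, rfl⟩ := h1
        refine ⟨_, Submonoid.subset_closure ⟨-t, Or.inl ⟨i, j, hij, rfl⟩⟩, ?_, ?_⟩ <;>
        · rw [std_neg, std_neg]
          have hij' : Sum.inl i ≠ (Sum.inl j : Fin l ⊕ Fin l) := by simp [hij]
          have hij'' : Sum.inr j ≠ (Sum.inr i : Fin l ⊕ Fin l) := by simp [hij.symm]
          simp [mul_add, add_mul, mul_sub, sub_mul, single_mul_single_of_ne, hij, hij.symm]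
          abel
      · obtain ⟨i, j, hij, rfl⟩ := h2
        refine ⟨_, Submonoid.subset_closure ⟨-t, Or.inr (Or.inl ⟨i, j, hij, rfl⟩)⟩, ?_, ?_⟩ <;>
        · rw [std_neg, std_neg]
          simp [mul_add, add_mul, single_mul_single_of_ne]
          abel
      · obtain ⟨i, j, hij, rfl⟩ := h3
        refine ⟨_, Submonoid.subset_closure ⟨-t, Or.inr (Or.inr (Or.inl ⟨i, j, hij, rfl⟩))⟩, ?_, ?_⟩ <;>
        · rw [std_neg, std_neg]
          simp [mul_add, add_mul, single_mul_single_of_ne]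
          abel
      · obtain ⟨i, rfl⟩ := h4
        refine ⟨_, Submonoid.subset_closure ⟨-t, Or.inr (Or.inr (Or.inr (Or.inl ⟨i, rfl⟩)))⟩, ?_, ?_⟩ <;>
        · rw [std_neg]
          simp [mul_add, add_mul, single_mul_single_of_ne]
      · obtain ⟨i, rfl⟩ := h5
        refine ⟨_, Submonoid.subset_closure ⟨-t, Or.inr (Or.inr (Or.inr (Or.inr ⟨i, rfl⟩)))⟩, ?_, ?_⟩ <;>
        · rw [std_neg]
          simp [mul_add, add_mul, single_mul_single_of_ne]
  | one => exact ⟨1, one_mem _, by simp, by simp⟩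
  | mul x y hx hy ihx ihy =>
      obtain ⟨x', hx', hxx', hx'x⟩ := ihx
      obtain ⟨y', hy', hyy', hy'y⟩ := ihy
      refine ⟨y' * x', mul_mem hy' hx', ?_, ?_⟩
      · rw [mul_assoc, ← mul_assoc y, hyy', one_mul, hxx']
      · rw [mul_assoc, ← mul_assoc x', hx'x, one_mul, hy'y]

lemma mem_of_mul_mem {u v h : 𝕄} (hu : u ∈ H) (hv : v ∈ H) (hm : u * h * v ∈ H) :
    h ∈ H := by
  obtain ⟨u', hu', huu', hu'u⟩ := closure_inv hu
  obtain ⟨v', hv', hvv', hv'v⟩ := closure_inv hv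
  have heq : u' * (u * h * v) * v' = h := by
    rw [show u * h * v = u * (h * v) from by rw [mul_assoc], ← mul_assoc u', hu'u, one_mul,
      mul_assoc, hvv', mul_one]
  have hmem := mul_mem (mul_mem hu' hm) hv'
  rwa [heq] at hmem

/-! ### upper and lower unipotent block matrices -/

lemma upper_mul (B B' : 𝕃) :
    (fromBlocks 1 B 0 1 : 𝕄) * fromBlocks 1 B' 0 1 = fromBlocks 1 (B + B') 0 1 := by
  rw [fromBlocks_multiply]
  simp [add_comm]

lemma lower_mul (C C' : 𝕃) :
    (fromBlocks 1 0 C 1 : 𝕄) * fromBlocks 1 0 C' 1 = fromBlocks 1 0 (C + C') 1 := by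
  rw [fromBlocks_multiply]
  simp [add_comm]

lemma sym_decomp (h2 : (2 : k) ≠ 0) {B : 𝕃} (hB : Bᵀ = B) :
    B = ∑ i : Fin l, ∑ j : Fin l,
      (Matrix.single i j ((2⁻¹ : k) * B i j) + Matrix.single j i ((2⁻¹ : k) * B i j)) := by
  have hhalf : (2⁻¹ : k) + 2⁻¹ = 1 := by
    rw [← two_mul, mul_inv_cancel₀ h2]
  have h1 : ∑ i : Fin l, ∑ j : Fin l, Matrix.single i j ((2⁻¹ : k) * B i j)
      = ((2⁻¹ : k) • B : 𝕃) := by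
    conv_rhs => rw [matrix_eq_sum_single ((2⁻¹ : k) • B : 𝕃)]
    simp [Matrix.smul_apply]
  have hh2 : ∑ i : Fin l, ∑ j : Fin l, Matrix.single j i ((2⁻¹ : k) * B i j)
      = ((2⁻¹ : k) • B : 𝕃) := by
    rw [Finset.sum_comm]
    have hsymm : ∀ a b : Fin l, B b a = B a b := by
      intro a b
      nth_rewrite 1 [← hB]
      rw [transpose_apply]
    have step : ∀ a b : Fin l, Matrix.single a b ((2⁻¹ : k) * B b a)
        = Matrix.single a b ((((2⁻¹ : k) • B) : 𝕃) a b) := by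
      intro a b
      congr 1
      rw [Matrix.smul_apply, smul_eq_mul, hsymm]
    calc ∑ a : Fin l, ∑ b : Fin l, Matrix.single a b ((2⁻¹ : k) * B b a)
        = ∑ a : Fin l, ∑ b : Fin l, Matrix.single a b ((((2⁻¹ : k) • B) : 𝕃) a b) := by
          exact Finset.sum_congr rfl fun a _ => Finset.sum_congr rfl fun b _ => step a b
      _ = ((2⁻¹ : k) • B : 𝕃) := (matrix_eq_sum_single _).symm
  have key : ∑ i : Fin l, ∑ j : Fin l,
      (Matrix.single i j ((2⁻¹ : k) * B i j) + Matrix.single j i ((2⁻¹ : k) * B i j))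
      = ((2⁻¹ : k) • B : 𝕃) + (2⁻¹ : k) • B := by
    calc ∑ i : Fin l, ∑ j : Fin l,
        (Matrix.single i j ((2⁻¹ : k) * B i j) + Matrix.single j i ((2⁻¹ : k) * B i j))
        = (∑ i : Fin l, ∑ j : Fin l, Matrix.single i j ((2⁻¹ : k) * B i j))
          + ∑ i : Fin l, ∑ j : Fin l, Matrix.single j i ((2⁻¹ : k) * B i j) := by
          rw [← Finset.sum_add_distrib]
          exact Finset.sum_congr rfl fun i _ => Finset.sum_add_distrib
      _ = ((2⁻¹ : k) • B : 𝕃) + (2⁻¹ : k) • B := by rw [h1, hh2]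
  rw [key, ← add_smul, hhalf, one_smul]

lemma mem_upper (h2 : (2 : k) ≠ 0) {B : 𝕃} (hB : Bᵀ = B) :
    (fromBlocks 1 B 0 1 : 𝕄) ∈ H := by
  let T : AddSubmonoid 𝕃 :=
    { carrier := {B : 𝕃 | (fromBlocks 1 B 0 1 : 𝕄) ∈ H}
      zero_mem' := by
        show (fromBlocks 1 0 0 1 : 𝕄) ∈ H
        rw [fromBlocks_one]; exact one_mem _
      add_mem' := by
        intro a b ha hb
        show (fromBlocks 1 (a + b) 0 1 : 𝕄) ∈ H
        rw [← upper_mul]; exact mul_mem ha hb }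
  show B ∈ T
  have key : ∀ (i j : Fin l) (t : k), Matrix.single i j t + Matrix.single j i t ∈ T := by
    intro i j t
    rcases lt_trichotomy i j with h | rfl | h
    · exact gen2_mem i j h t
    · show (fromBlocks 1 _ 0 1 : 𝕄) ∈ H
      rw [← single_add]; exact gen4_mem i (t + t)
    · rw [add_comm]; exact gen2_mem j i h t
  rw [sym_decomp h2 hB]
  exact sum_mem fun i _ => sum_mem fun j _ => key i j _

lemma mem_lower (h2 : (2 : k) ≠ 0) {C : 𝕃} (hC : Cᵀ = C) :
    (fromBlocks 1 0 C 1 : 𝕄) ∈ H := by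
  let T : AddSubmonoid 𝕃 :=
    { carrier := {C : 𝕃 | (fromBlocks 1 0 C 1 : 𝕄) ∈ H}
      zero_mem' := by
        show (fromBlocks 1 0 0 1 : 𝕄) ∈ H
        rw [fromBlocks_one]; exact one_mem _
      add_mem' := by
        intro a b ha hb
        show (fromBlocks 1 0 (a + b) 1 : 𝕄) ∈ H
        rw [← lower_mul]; exact mul_mem ha hb }
  show C ∈ T
  have key : ∀ (i j : Fin l) (t : k), Matrix.single i j t + Matrix.single j i t ∈ T := by
    intro i j t
    rcases lt_trichotomy i j with h | rfl | h
    · exact gen3_mem i j h t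
    · show (fromBlocks 1 0 _ 1 : 𝕄) ∈ H
      rw [← single_add]; exact gen5_mem i (t + t)
    · rw [add_comm]; exact gen3_mem j i h t
  rw [sym_decomp h2 hC]
  exact sum_mem fun i _ => sum_mem fun j _ => key i j _

/-! ### the Levi subgroup -/

def LP (A : Matrix (Fin l) (Fin l) k) : Prop :=
  ∃ A', A * A' = 1 ∧ A' * A = 1 ∧ (fromBlocks A 0 0 A'ᵀ : 𝕄) ∈ Submonoid.closure (sympElem k l)

lemma LP_one : LP (1 : 𝕃) :=
  ⟨1, by simp, by simp, by rw [transpose_one, fromBlocks_one]; exact one_mem _⟩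

lemma LP_mul {A B : 𝕃} (hA : LP A) (hB : LP B) : LP (A * B) := by
  obtain ⟨A', hAA', hA'A, hAH⟩ := hA
  obtain ⟨B', hBB', hB'B, hBH⟩ := hB
  refine ⟨B' * A', ?_, ?_, ?_⟩
  · rw [mul_assoc, ← mul_assoc B, hBB', one_mul, hAA']
  · rw [mul_assoc, ← mul_assoc A', hA'A, one_mul, hB'B]
  · rw [transpose_mul]
    have : (fromBlocks (A * B) 0 0 (A'ᵀ * B'ᵀ) : 𝕄)
        = fromBlocks A 0 0 A'ᵀ * fromBlocks B 0 0 B'ᵀ := by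
      rw [fromBlocks_multiply]; norm_num
    rw [this]; exact mul_mem hAH hBH

lemma std_transpose (i j : Fin l) (t : k) :
    (Matrix.single i j t : 𝕃)ᵀ = Matrix.single j i t := by
  ext a b
  simp only [Matrix.single, of_apply, transpose_apply]
  by_cases h1 : i = b <;> by_cases h2 : j = a <;> simp [h1, h2, and_comm]

lemma LP_transvection {i j : Fin l} (hij : i ≠ j) (c : k) : LP (transvection i j c) := by
  refine ⟨transvection i j (-c), ?_, ?_, ?_⟩
  · rw [transvection_mul_transvection_same _ _ hij, add_neg_cancel, transvection_zero]
  · rw [transvection_mul_transvection_same _ _ hij, neg_add_cancel, transvection_zero]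
  · have : (transvection i j (-c) : 𝕃)ᵀ = 1 - Matrix.single j i c := by
      rw [transvection, transpose_add, transpose_one, std_transpose, std_neg,
        sub_eq_add_neg]
    rw [this]
    exact gen1_mem i j hij c


lemma diag_update (i : Fin l) (c : k) :
    diagonal (Function.update (1 : Fin l → k) i c) = (1 : 𝕃) + Matrix.single i i (c - 1) := by
  ext a b
  simp only [diagonal, of_apply, Matrix.add_apply, Matrix.one_apply, Matrix.single,
    Function.update_apply, Pi.one_apply]
  by_cases hab : a = b
  · subst hab
    by_cases hia : a = i
    · subst hia; simp
    · simp [hia, Ne.symm hia]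
  · have : ¬(i = a ∧ i = b) := by
      rintro ⟨rfl, rfl⟩; exact hab rfl
    simp [hab, this]

lemma six_gen (i : Fin l) {a : k} (ha : a ≠ 0) :
    (fromBlocks 1 (Matrix.single i i a) 0 1 : 𝕄)
      * fromBlocks 1 0 (Matrix.single i i (-a⁻¹)) 1
      * fromBlocks 1 (Matrix.single i i a) 0 1
      * fromBlocks 1 (Matrix.single i i (-1 : k)) 0 1
      * fromBlocks 1 0 (Matrix.single i i (1 : k)) 1
      * fromBlocks 1 (Matrix.single i i (-1 : k)) 0 1
      = fromBlocks (1 + Matrix.single i i (a - 1)) 0 0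
          (1 + Matrix.single i i (a⁻¹ - 1)) := by
  simp only [fromBlocks_multiply, Matrix.mul_add, Matrix.add_mul, Matrix.mul_one,
    Matrix.one_mul, single_mul_single_same, Matrix.mul_zero, Matrix.zero_mul,
    add_zero, zero_add]
  rw [fromBlocks_inj]
  refine ⟨?_, ?_, ?_, ?_⟩ <;>
  · ext x y
    simp only [Matrix.add_apply, Matrix.one_apply, Matrix.single, Matrix.of_apply,
      Matrix.zero_apply]
    split_ifs <;> field_simp <;> ring

lemma LP_diag_single (i : Fin l) {a : k} (ha : a ≠ 0) :
    LP (diagonal (Function.update (1 : Fin l → k) i a)) := by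
  refine ⟨diagonal (Function.update (1 : Fin l → k) i a⁻¹), ?_, ?_, ?_⟩
  · rw [diagonal_mul_diagonal]
    have : (fun j => Function.update (1 : Fin l → k) i a j
        * Function.update (1 : Fin l → k) i a⁻¹ j) = fun _ => (1 : k) := by
      funext j
      by_cases hj : j = i
      · subst hj; simp [mul_inv_cancel₀ ha]
      · simp [Function.update_apply, hj]
    rw [this, diagonal_one]
  · rw [diagonal_mul_diagonal]
    have : (fun j => Function.update (1 : Fin l → k) i a⁻¹ j
        * Function.update (1 : Fin l → k) i a j) = fun _ => (1 : k) := by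
      funext j
      by_cases hj : j = i
      · subst hj; simp [inv_mul_cancel₀ ha]
      · simp [Function.update_apply, hj]
    rw [this, diagonal_one]
  · rw [diagonal_transpose, diag_update, diag_update, ← six_gen i ha]
    exact mul_mem (mul_mem (mul_mem (mul_mem (mul_mem
      (gen4_mem i a) (gen5_mem i (-a⁻¹))) (gen4_mem i a))
      (gen4_mem i (-1))) (gen5_mem i 1)) (gen4_mem i (-1))

lemma LP_diag_aux (s : Finset (Fin l)) {δ : Fin l → k} (hδ : ∀ i, δ i ≠ 0) :
    LP (diagonal (fun j => if j ∈ s then δ j else 1)) := by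
  classical
  induction s using Finset.induction with
  | empty => simpa using LP_one
  | @insert a s ha ih =>
      have hsplit : (fun j => if j ∈ insert a s then δ j else (1 : k))
          = fun j => Function.update (1 : Fin l → k) a (δ a) j
            * (if j ∈ s then δ j else 1) := by
        funext j
        by_cases hj : j = a
        · subst hj; simp [ha]
        · simp [Function.update_apply, hj, Finset.mem_insert]
      have : diagonal (fun j => if j ∈ insert a s then δ j else (1 : k))
          = diagonal (Function.update (1 : Fin l → k) a (δ a))
            * diagonal (fun j => if j ∈ s then δ j else 1) := by
        rw [diagonal_mul_diagonal, hsplit]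
      rw [this]
      exact LP_mul (LP_diag_single a (hδ a)) ih

lemma LP_diagonal {δ : Fin l → k} (hδ : ∀ i, δ i ≠ 0) : LP (diagonal δ) := by
  have := LP_diag_aux (Finset.univ : Finset (Fin l)) hδ
  simpa using this

lemma LP_listprod (L : List (TransvectionStruct (Fin l) k)) :
    LP (L.map TransvectionStruct.toMatrix).prod := by
  induction L with
  | nil => simpa using LP_one
  | cons t L ih =>
      rw [List.map_cons, List.prod_cons]
      exact LP_mul (by rw [TransvectionStruct.toMatrix]; exact LP_transvection t.hij t.c) ih

lemma levi_mem {A : 𝕃} (hA : IsUnit A.det) : (fromBlocks A 0 0 (A⁻¹)ᵀ : 𝕄) ∈ H := by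
  have LPA : LP A := by
    obtain ⟨L, L', δ, hdec⟩ := Matrix.Pivot.exists_list_transvec_mul_diagonal_mul_list_transvec A
    have hδ : ∀ i, δ i ≠ 0 := by
      intro i hi
      have hdet : A.det = 0 := by
        rw [hdec, det_mul, det_mul, det_diagonal,
          Finset.prod_eq_zero (Finset.mem_univ i) hi]
        ring
      rw [hdet] at hA
      exact not_isUnit_zero hA
    rw [hdec]
    exact LP_mul (LP_mul (LP_listprod L) (LP_diagonal hδ)) (LP_listprod L')
  obtain ⟨A', hAA', _, hH⟩ := LPA
  rwa [inv_eq_right_inv hAA']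

/-! ### symplectic matrices -/

local notation "J" => (fromBlocks 0 1 (-1) 0 : Matrix (Fin l ⊕ Fin l) (Fin l ⊕ Fin l) k)

def IsSp (h : 𝕄) : Prop := hᵀ * J * h = J

lemma IsSp_mul {u v : 𝕄} (hu : IsSp u) (hv : IsSp v) : IsSp (u * v) := by
  unfold IsSp at *
  rw [transpose_mul, ← mul_assoc, mul_assoc vᵀ uᵀ J, mul_assoc vᵀ (uᵀ * J) u, hu, hv]

lemma JJ : (J : 𝕄) * J = -1 := by
  rw [fromBlocks_multiply]
  have : (fromBlocks (-1) 0 0 (-1) : 𝕄) = -1 := by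
    rw [← fromBlocks_one, fromBlocks_neg, neg_zero]
  rw [← this]
  norm_num

lemma IsSp_transpose {h : 𝕄} (hu : IsUnit h.det) (hsp : IsSp h) : IsSp hᵀ := by
  have hleft : ((-J) * hᵀ * J) * h = 1 := by
    rw [mul_assoc, mul_assoc, ← mul_assoc hᵀ J h, hsp, neg_mul, JJ, neg_neg]
  have hright : h * ((-J) * hᵀ * J) = 1 := mul_eq_one_comm.mpr hleft
  have expand : h * (-J) * hᵀ * J = 1 := by
    rw [mul_assoc, mul_assoc]
    rw [mul_assoc] at hright
    exact hright
  have e2 : (h * (-J) * hᵀ) * ((J : 𝕄) * (-J)) = -J := by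
    rw [← mul_assoc, expand, one_mul]
  have e3 : (J : 𝕄) * (-J) = 1 := by rw [mul_neg, JJ, neg_neg]
  rw [e3, mul_one, mul_neg, neg_mul] at e2
  have e4 := neg_injective e2
  show hᵀᵀ * J * hᵀ = J
  rw [transpose_transpose, e4]

lemma sp_rels {A B C D : 𝕃} (hsp : IsSp (fromBlocks A B C D)) :
    Aᵀ * C = Cᵀ * A ∧ Aᵀ * D - Cᵀ * B = 1 ∧ Bᵀ * D = Dᵀ * B := by
  unfold IsSp at hsp
  rw [fromBlocks_transpose, fromBlocks_multiply, fromBlocks_multiply] at hsp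
  simp only [Matrix.mul_zero, Matrix.zero_mul, Matrix.mul_one, Matrix.one_mul,
    Matrix.mul_neg, Matrix.neg_mul, add_zero, zero_add, Matrix.mul_assoc] at hsp
  rw [fromBlocks_inj] at hsp
  obtain ⟨h11, h12, h21, h22⟩ := hsp
  refine ⟨(neg_add_eq_zero.mp h11).symm, ?_, (neg_add_eq_zero.mp h22).symm⟩
  rw [sub_eq_add_neg, add_comm]
  exact h12

lemma IsSp_upper {S : 𝕃} (hS : Sᵀ = S) : IsSp (fromBlocks 1 S 0 1 : 𝕄) := by
  unfold IsSp
  rw [fromBlocks_transpose, fromBlocks_multiply, fromBlocks_multiply]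
  simp only [Matrix.mul_zero, Matrix.zero_mul, Matrix.mul_one, Matrix.one_mul,
    Matrix.mul_neg, Matrix.neg_mul, add_zero, zero_add, transpose_zero, transpose_one]
  rw [hS]
  norm_num

lemma IsSp_lower {S : 𝕃} (hS : Sᵀ = S) : IsSp (fromBlocks 1 0 S 1 : 𝕄) := by
  unfold IsSp
  rw [fromBlocks_transpose, fromBlocks_multiply, fromBlocks_multiply]
  simp only [Matrix.mul_zero, Matrix.zero_mul, Matrix.mul_one, Matrix.one_mul,
    Matrix.mul_neg, Matrix.neg_mul, add_zero, zero_add, transpose_zero, transpose_one]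
  rw [hS]
  norm_num

lemma IsSp_levi {U : 𝕃} (hU : IsUnit U.det) : IsSp (fromBlocks U 0 0 (U⁻¹)ᵀ : 𝕄) := by
  haveI := U.invertibleOfIsUnitDet hU
  unfold IsSp
  rw [fromBlocks_transpose, fromBlocks_multiply, fromBlocks_multiply]
  simp only [Matrix.mul_zero, Matrix.zero_mul, Matrix.mul_one, Matrix.one_mul,
    Matrix.mul_neg, Matrix.neg_mul, add_zero, zero_add, transpose_zero, transpose_transpose]
  rw [show Uᵀ * (U⁻¹)ᵀ = (U⁻¹ * U)ᵀ from (transpose_mul _ _).symm,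
    Matrix.inv_mul_of_invertible, transpose_one]
  norm_num

/-! ### main lemma: symplectic matrices lie in the elementary closure -/

lemma sp_mem (h2 : (2 : k) ≠ 0) {h : 𝕄} (hu : IsUnit h.det) (hsp : IsSp h) : h ∈ H := by
  classical
  obtain ⟨L, L', δ, hdec⟩ :=
    Matrix.Pivot.exists_list_transvec_mul_diagonal_mul_list_transvec (h.toBlocks₁₁)
  set A := h.toBlocks₁₁ with hA
  set B := h.toBlocks₁₂ with hB
  set C := h.toBlocks₂₁ with hC
  set D := h.toBlocks₂₂ with hD
  have hblocks : h = fromBlocks A B C D := (fromBlocks_toBlocks h).symm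
  set P := (L.map TransvectionStruct.toMatrix).prod with hPdef
  set Q := (L'.map TransvectionStruct.toMatrix).prod with hQdef
  have hPdet : IsUnit P.det := by
    rw [hPdef, TransvectionStruct.det_toMatrix_prod]; exact isUnit_one
  have hQdet : IsUnit Q.det := by
    rw [hQdef, TransvectionStruct.det_toMatrix_prod]; exact isUnit_one
  haveI instP : Invertible P := P.invertibleOfIsUnitDet hPdet
  haveI instQ : Invertible Q := Q.invertibleOfIsUnitDet hQdet
  have hPinvdet : IsUnit (P⁻¹).det := isUnit_nonsing_inv_det_iff.mpr hPdet
  have hQinvdet : IsUnit (Q⁻¹).det := isUnit_nonsing_inv_det_iff.mpr hQdet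
  -- the matrix with diagonal upper-left block
  set h1 := (fromBlocks P⁻¹ 0 0 ((P⁻¹)⁻¹)ᵀ : 𝕄) * h * fromBlocks Q⁻¹ 0 0 ((Q⁻¹)⁻¹)ᵀ with h1def
  have hPP : (P⁻¹)⁻¹ = P := nonsing_inv_nonsing_inv P hPdet
  have hQQ : (Q⁻¹)⁻¹ = Q := nonsing_inv_nonsing_inv Q hQdet
  have hsp1 : IsSp h1 := by
    rw [h1def]
    exact IsSp_mul (IsSp_mul (IsSp_levi hPinvdet) hsp) (IsSp_levi hQinvdet)
  have hdet1 : IsUnit h1.det := by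
    rw [h1def, det_mul, det_mul, det_fromBlocks_zero₂₁, det_fromBlocks_zero₂₁]
    exact ((hPinvdet.mul (by rw [det_transpose, hPP]; exact hPdet)).mul hu).mul
      (hQinvdet.mul (by rw [det_transpose, hQQ]; exact hQdet))
  have hA1 : h1.toBlocks₁₁ = diagonal δ := by
    rw [h1def, hblocks, fromBlocks_multiply, fromBlocks_multiply, toBlocks_fromBlocks₁₁]
    simp only [Matrix.zero_mul, Matrix.mul_zero, add_zero, zero_add]
    rw [hdec]
    simp only [Matrix.mul_assoc, Matrix.mul_inv_of_invertible, Matrix.mul_one,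
      Matrix.inv_mul_cancel_left_of_invertible]
  set B1 := h1.toBlocks₁₂ with hB1
  set C1 := h1.toBlocks₂₁ with hC1
  set D1 := h1.toBlocks₂₂ with hD1
  have hform : h1 = fromBlocks (diagonal δ) B1 C1 D1 := by
    rw [← hA1, hB1, hC1, hD1]
    exact (fromBlocks_toBlocks h1).symm
  -- the fixing matrix S
  set ε : Fin l → k := fun i => if δ i = 0 then 1 else 0 with hε
  set S := (diagonal ε : 𝕃) with hS
  have hSsym : Sᵀ = S := diagonal_transpose ε
  set A2 := (diagonal δ + S * C1 : 𝕃) with hA2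
  set B2 := (B1 + S * D1 : 𝕃) with hB2
  have hmul2 : (fromBlocks 1 S 0 1 : 𝕄) * h1 = fromBlocks A2 B2 C1 D1 := by
    rw [hform, fromBlocks_multiply]
    simp only [Matrix.one_mul, Matrix.zero_mul, Matrix.mul_zero, add_zero, zero_add]
    rfl
  have hsp2 : IsSp (fromBlocks A2 B2 C1 D1 : 𝕄) := by
    rw [← hmul2]
    exact IsSp_mul (IsSp_upper hSsym) hsp1
  have hdet2 : IsUnit (fromBlocks A2 B2 C1 D1 : 𝕄).det := by
    rw [← hmul2, det_mul, det_fromBlocks_zero₂₁]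
    simp only [det_one, one_mul]
    exact hdet1
  -- relations
  obtain ⟨r1, r2, -⟩ := sp_rels hsp2
  obtain ⟨r1d, -, -⟩ := sp_rels (show IsSp (fromBlocks (diagonal δ) B1 C1 D1 : 𝕄) by
    rw [← hform]; exact hsp1)
  have hsymC : ∀ i j, δ i * C1 i j = C1 j i * δ j := by
    intro i j
    have hent := congrFun (congrFun r1d i) j
    rwa [diagonal_transpose, diagonal_mul, mul_diagonal, transpose_apply] at hent
  have hker : ∀ x : Fin l → k, A2.mulVec x = 0 → x = 0 := by
    intro x hx
    have hxx : (diagonal δ + S * C1).mulVec x = 0 := by rw [← hA2]; exact hx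
    have hx1 : ∀ i, δ i * x i + ε i * C1.mulVec x i = 0 := by
      intro i
      have hthis := congrFun hxx i
      rw [Matrix.add_mulVec, ← Matrix.mulVec_mulVec] at hthis
      rw [Pi.add_apply] at hthis
      rw [Matrix.mulVec_diagonal] at hthis
      rw [hS, Matrix.mulVec_diagonal] at hthis
      exact hthis
    have hxsupp : ∀ i, δ i ≠ 0 → x i = 0 := by
      intro i hi
      have hth := hx1 i
      have hez : ε i = 0 := by rw [hε]; simp [hi]
      rw [hez, zero_mul, add_zero] at hth
      exact (mul_eq_zero.mp hth).resolve_left hi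
    have hCx : C1.mulVec x = 0 := by
      funext i
      by_cases hi : δ i = 0
      · have hth := hx1 i
        have he1 : ε i = 1 := by rw [hε]; simp [hi]
        rw [he1, one_mul, hi, zero_mul, zero_add] at hth
        exact hth
      · show C1.mulVec x i = 0
        have hexp : C1.mulVec x i = ∑ j, C1 i j * x j := by
          simp [Matrix.mulVec, dotProduct]
        rw [hexp]
        apply Finset.sum_eq_zero
        intro j _
        by_cases hj : δ j = 0
        · have h0 : C1 i j = 0 := by
            have hsy := hsymC i j
            rw [hj, mul_zero] at hsy
            exact (mul_eq_zero.mp hsy).resolve_left hi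
          rw [h0, zero_mul]
        · rw [hxsupp j hj, mul_zero]
    have hdx : (diagonal δ).mulVec x = 0 := by
      funext i
      show (diagonal δ).mulVec x i = (0 : Fin l → k) i
      rw [Matrix.mulVec_diagonal, Pi.zero_apply]
      by_cases hi : δ i = 0
      · rw [hi, zero_mul]
      · rw [hxsupp i hi, mul_zero]
    have hzero : h1.mulVec (Sum.elim x 0) = 0 := by
      rw [hform, fromBlocks_mulVec, Sum.elim_comp_inl, Sum.elim_comp_inr, hdx, hCx]
      simp
    have hinj : Function.Injective h1.mulVec :=
      mulVec_injective_iff_isUnit.mpr ((isUnit_iff_isUnit_det h1).mpr hdet1)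
    have hel : Sum.elim x (0 : Fin l → k) = 0 := hinj (by rw [hzero, Matrix.mulVec_zero])
    funext i
    exact congrFun hel (Sum.inl i)
  have hA2inj : Function.Injective A2.mulVec := by
    intro x y hxy
    have hs := hker (x - y) (by rw [Matrix.mulVec_sub, hxy, sub_self])
    exact sub_eq_zero.mp hs
  have hA2det : IsUnit A2.det :=
    (isUnit_iff_isUnit_det A2).mp (mulVec_injective_iff_isUnit.mp hA2inj)
  haveI instA2 : Invertible A2 := A2.invertibleOfIsUnitDet hA2det
  haveI instA2T : Invertible A2ᵀ :=
    A2ᵀ.invertibleOfIsUnitDet (by rw [det_transpose]; exact hA2det)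
  set W := (C1 * A2⁻¹ : 𝕃) with hW
  set T := (A2⁻¹ * B2 : 𝕃) with hT
  have hWalt : (A2ᵀ)⁻¹ * C1ᵀ = W := by
    rw [hW]
    calc (A2ᵀ)⁻¹ * C1ᵀ = (A2ᵀ)⁻¹ * (C1ᵀ * A2 * A2⁻¹) := by
          rw [Matrix.mul_inv_cancel_right_of_invertible]
      _ = (A2ᵀ)⁻¹ * (A2ᵀ * C1 * A2⁻¹) := by rw [← r1]
      _ = C1 * A2⁻¹ := by
          rw [Matrix.mul_assoc A2ᵀ C1 A2⁻¹, Matrix.inv_mul_cancel_left_of_invertible]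
  have hWsym : Wᵀ = W := by
    rw [hW, transpose_mul, transpose_nonsing_inv]
    rw [hW] at hWalt
    exact hWalt
  have hspT := IsSp_transpose hdet2 hsp2
  rw [fromBlocks_transpose] at hspT
  obtain ⟨rr1, -, -⟩ := sp_rels hspT
  rw [transpose_transpose, transpose_transpose] at rr1
  have hTsym : Tᵀ = T := by
    rw [hT, transpose_mul, transpose_nonsing_inv]
    calc B2ᵀ * (A2ᵀ)⁻¹ = A2⁻¹ * (A2 * B2ᵀ) * (A2ᵀ)⁻¹ := by
          rw [Matrix.inv_mul_cancel_left_of_invertible]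
      _ = A2⁻¹ * (B2 * A2ᵀ) * (A2ᵀ)⁻¹ := by rw [rr1]
      _ = A2⁻¹ * B2 := by
          rw [Matrix.mul_assoc A2⁻¹ (B2 * A2ᵀ) ((A2ᵀ)⁻¹),
            Matrix.mul_assoc B2 A2ᵀ ((A2ᵀ)⁻¹), Matrix.mul_inv_of_invertible,
            Matrix.mul_one]
  have hAT : A2 * T = B2 := by
    rw [hT, Matrix.mul_inv_cancel_left_of_invertible]
  have hD1rel : D1 = W * B2 + (A2ᵀ)⁻¹ := by
    have e : A2ᵀ * D1 = 1 + C1ᵀ * B2 := eq_add_of_sub_eq r2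
    have e2 : D1 = (A2ᵀ)⁻¹ * (1 + C1ᵀ * B2) := by
      rw [← e, Matrix.inv_mul_cancel_left_of_invertible]
    rw [e2, Matrix.mul_add, Matrix.mul_one, ← Matrix.mul_assoc, hWalt, add_comm]
  have hdecomp : (fromBlocks 1 0 W 1 : 𝕄) * fromBlocks A2 0 0 ((A2⁻¹)ᵀ) * fromBlocks 1 T 0 1
      = fromBlocks A2 B2 C1 D1 := by
    rw [fromBlocks_multiply, fromBlocks_multiply]
    simp only [Matrix.one_mul, Matrix.mul_one, Matrix.zero_mul, Matrix.mul_zero,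
      add_zero, zero_add]
    rw [fromBlocks_inj]
    refine ⟨rfl, hAT, ?_, ?_⟩
    · rw [hW, Matrix.inv_mul_cancel_right_of_invertible]
    · rw [hD1rel, Matrix.mul_assoc W A2 T, hAT, transpose_nonsing_inv]
  have hmem2 : (fromBlocks A2 B2 C1 D1 : 𝕄) ∈ H := by
    rw [← hdecomp]
    exact mul_mem (mul_mem (mem_lower h2 hWsym) (levi_mem hA2det)) (mem_upper h2 hTsym)
  have hmem1 : h1 ∈ H := by
    apply mem_of_mul_mem (mem_upper h2 hSsym) (one_mem _)
    rw [mul_one, hmul2]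
    exact hmem2
  exact mem_of_mul_mem (levi_mem hPinvdet) (levi_mem hQinvdet)
    (by rw [← h1def]; exact hmem1)

end GSpGauss

open GSpGauss

/-- Gaussian elimination in the symplectic similitude group `GSp(2l, k)`:
every `g` with `ᵀg·β·g = μ·β` is a product of elementary symplectic matrices and the
diagonal matrix `diag(1, …, 1, μ, …, μ)`. -/
theorem GSp_gaussian_elimination (k : Type*) [Field k] (hchar : ringChar k ≠ 2)
    (l : ℕ) (hl : 2 ≤ l)
    (g : Matrix (Fin l ⊕ Fin l) (Fin l ⊕ Fin l) k) (hg : IsUnit g.det) (μ : kˣ)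
    (hsim : gᵀ * (Matrix.fromBlocks 0 1 (-1) 0 :
        Matrix (Fin l ⊕ Fin l) (Fin l ⊕ Fin l) k) * g
      = (μ : k) • (Matrix.fromBlocks 0 1 (-1) 0 :
        Matrix (Fin l ⊕ Fin l) (Fin l ⊕ Fin l) k)) :
    ∃ E ∈ Submonoid.closure (sympElem k l),
      g = E * Matrix.diagonal (Sum.elim (fun _ => (1 : k)) (fun _ => (μ : k))) := by
  classical
  have h2 : (2 : k) ≠ 0 := Ring.two_ne_zero hchar
  set Dμ : Matrix (Fin l ⊕ Fin l) (Fin l ⊕ Fin l) k :=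
    Matrix.diagonal (Sum.elim (fun _ => (1 : k)) (fun _ => (μ : k))) with hDμ
  set Dinv : Matrix (Fin l ⊕ Fin l) (Fin l ⊕ Fin l) k :=
    Matrix.diagonal (Sum.elim (fun _ => (1 : k)) (fun _ => ((μ⁻¹ : kˣ) : k))) with hDinv
  have hDD : Dμ * Dinv = 1 := by
    rw [hDμ, hDinv, diagonal_mul_diagonal]
    rw [show (fun i => Sum.elim (fun _ => (1 : k)) (fun _ => (μ : k)) i
        * Sum.elim (fun _ => (1 : k)) (fun _ => ((μ⁻¹ : kˣ) : k)) i)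
        = fun _ => (1 : k) from by funext x; rcases x with i | i <;> simp]
    exact diagonal_one
  have hDD' : Dinv * Dμ = 1 := by
    rw [hDμ, hDinv, diagonal_mul_diagonal]
    rw [show (fun i => Sum.elim (fun _ => (1 : k)) (fun _ => ((μ⁻¹ : kˣ) : k)) i
        * Sum.elim (fun _ => (1 : k)) (fun _ => (μ : k)) i)
        = fun _ => (1 : k) from by funext x; rcases x with i | i <;> simp]
    exact diagonal_one
  have hDt : Dinvᵀ = Dinv := diagonal_transpose _
  have hDinvu : IsUnit Dinv := ⟨⟨Dinv, Dμ, hDD', hDD⟩, rfl⟩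
  have hDfb : Dinv = Matrix.fromBlocks 1 0 0 (diagonal (fun _ : Fin l => ((μ⁻¹ : kˣ) : k))) := by
    rw [hDinv, ← fromBlocks_diagonal, diagonal_one]
  have hDJD : Dinv * (Matrix.fromBlocks 0 1 (-1) 0 :
        Matrix (Fin l ⊕ Fin l) (Fin l ⊕ Fin l) k) * Dinv
      = ((μ⁻¹ : kˣ) : k) • (Matrix.fromBlocks 0 1 (-1) 0 :
        Matrix (Fin l ⊕ Fin l) (Fin l ⊕ Fin l) k) := by
    have hd2 : (diagonal (fun _ : Fin l => ((μ⁻¹ : kˣ) : k)) : Matrix (Fin l) (Fin l) k)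
        = ((μ⁻¹ : kˣ) : k) • 1 := by
      ext i j
      by_cases h : i = j <;>
        simp [diagonal, Matrix.smul_apply, Matrix.one_apply, h]
    rw [hDfb, fromBlocks_multiply, fromBlocks_multiply, fromBlocks_smul]
    simp only [Matrix.mul_zero, Matrix.zero_mul, Matrix.mul_one, Matrix.one_mul,
      Matrix.mul_neg, Matrix.neg_mul, add_zero, zero_add, smul_zero, smul_neg]
    rw [fromBlocks_inj]
    refine ⟨neg_zero, hd2, ?_, rfl⟩
    rw [hd2]
  have hsp : IsSp (g * Dinv) := by
    show (g * Dinv)ᵀ * _ * (g * Dinv) = _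
    rw [transpose_mul, hDt]
    have expand : Dinv * gᵀ * (Matrix.fromBlocks 0 1 (-1) 0 :
          Matrix (Fin l ⊕ Fin l) (Fin l ⊕ Fin l) k) * (g * Dinv)
        = Dinv * (gᵀ * (Matrix.fromBlocks 0 1 (-1) 0 :
          Matrix (Fin l ⊕ Fin l) (Fin l ⊕ Fin l) k) * g) * Dinv := by
      simp only [Matrix.mul_assoc]
    rw [expand, hsim, mul_smul_comm, smul_mul_assoc, hDJD, smul_smul]
    rw [show ((μ : k) * ((μ⁻¹ : kˣ) : k)) = 1 by rw [← Units.val_mul, mul_inv_cancel, Units.val_one],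
      one_smul]
  have hu : IsUnit (g * Dinv).det := by
    rw [det_mul]
    exact hg.mul ((isUnit_iff_isUnit_det Dinv).mp hDinvu)
  refine ⟨g * Dinv, sp_mem h2 hu hsp, ?_⟩
  rw [mul_assoc, hDD', mul_one]
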